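/- Let Z ≠ 0 be real, α > 0, β < 0, and set ω = -β/α; assume ω > Z²/4. Define φ₊ : ℝ → ℝ by φ₊(x) = -(3β/2)·sech²((√ω/2)·x - artanh(Z/(2√ω))) and φ₋(x) = φ₊(-x). Then: (i) φ₋(0) = φ₊(0); (ii) φ₊'(0) - φ₋'(0) = Z·φ₋(0); (iii) (Z²/2)·φ₋(0) + Z·φ₋'(0) = φ₊''(0) - φ₋''(0). In particular, φ₊'(0) = (Z/2)·φ₊(0). -/

import Mathlib

/-- Inverse hyperbolic tangent: `artanh y = (1/2)·log((1+y)/(1-y))`. -/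
noncomputable def artanh (y : ℝ) : ℝ := 1/2 * Real.log ((1 + y) / (1 - y))

lemma tanh_artanh {y : ℝ} (h1 : -1 < y) (h2 : y < 1) : Real.tanh (artanh y) = y := by
  have h1' : 0 < 1 + y := by linarith
  have h2' : 0 < 1 - y := by linarith
  set r : ℝ := (1 + y) / (1 - y) with hr
  have hrpos : 0 < r := div_pos h1' h2'
  have hexp : Real.exp (artanh y) = Real.sqrt r := by
    rw [artanh, ← hr, one_div, inv_mul_eq_div, ← Real.log_sqrt hrpos.le,
      Real.exp_log (Real.sqrt_pos.2 hrpos)]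
  have hs : (0:ℝ) < Real.sqrt r := Real.sqrt_pos.2 hrpos
  have hsq : Real.sqrt r ^ 2 = r := Real.sq_sqrt hrpos.le
  rw [Real.tanh_eq_sinh_div_cosh, Real.sinh_eq, Real.cosh_eq, Real.exp_neg, hexp]
  have hrel : r * (1 - y) = 1 + y := by rw [hr]; field_simp
  have hne : Real.sqrt r ≠ 0 := ne_of_gt hs
  field_simp
  nlinarith [hsq, hrel]

/-- The half-soliton profiles `φ₊, φ₋` satisfy the δ-type vertex conditions
defining `D(A_Z)`, i.e. the bump/tail stationary profiles `U_Z` belong to the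
domain of the Airy operator on a balanced star graph. -/
theorem bump_profile_vertex_conditions (Z α β : ℝ) (hZ : Z ≠ 0) (hα : 0 < α)
    (hβ : β < 0) (hω : Z^2 / 4 < -β / α) :
    let ω : ℝ := -β / α
    let φp : ℝ → ℝ := fun x =>
      -(3 * β / 2) * (1 / Real.cosh (Real.sqrt ω / 2 * x - artanh (Z / (2 * Real.sqrt ω))))^2
    let φm : ℝ → ℝ := fun x => φp (-x)
    φm 0 = φp 0 ∧
    deriv φp 0 - deriv φm 0 = Z * φm 0 ∧
    Z^2 / 2 * φm 0 + Z * deriv φm 0 = iteratedDeriv 2 φp 0 - iteratedDeriv 2 φm 0 ∧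
    deriv φp 0 = Z / 2 * φp 0 := by
  intro ω φp φm
  have hω0 : 0 < ω := lt_of_le_of_lt (by positivity) hω
  set s := Real.sqrt ω with hs_def
  have hs : 0 < s := Real.sqrt_pos.2 hω0
  have hs2 : s ^ 2 = ω := Real.sq_sqrt hω0.le
  have hZ2 : Z ^ 2 < 4 * s ^ 2 := by rw [hs2]; linarith
  have hy1 : -1 < Z / (2 * s) := by
    rw [lt_div_iff₀ (by positivity)]
    nlinarith [sq_nonneg (Z + 2 * s)]
  have hy2 : Z / (2 * s) < 1 := by
    rw [div_lt_one (by positivity)]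
    nlinarith [sq_nonneg (Z - 2 * s)]
  set a : ℝ := artanh (Z / (2 * s)) with ha_def
  have htanh : Real.sinh a = Z / (2 * s) * Real.cosh a := by
    have := tanh_artanh hy1 hy2
    rw [Real.tanh_eq_sinh_div_cosh, div_eq_iff (Real.cosh_pos (x := a)).ne'] at this
    simpa [ha_def] using this
  set K : ℝ := -(3 * β / 2) with hK_def
  -- the derivative of φp at 0
  have hu : HasDerivAt (fun x : ℝ => s / 2 * x - a) (s / 2) 0 := by
    simpa using ((hasDerivAt_id (0:ℝ)).const_mul (s / 2)).sub_const a
  have hc : HasDerivAt (fun x : ℝ => Real.cosh (s / 2 * x - a))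
      (Real.sinh (-a) * (s / 2)) 0 := by
    have := (Real.hasDerivAt_cosh (s / 2 * 0 - a)).comp 0 hu
    simpa [Function.comp_def] using this
  have hcne : Real.cosh (-a) ≠ 0 := (Real.cosh_pos (-a)).ne'
  have hinv : HasDerivAt (fun x : ℝ => (Real.cosh (s / 2 * x - a))⁻¹)
      (-(Real.sinh (-a) * (s / 2)) / Real.cosh (-a) ^ 2) 0 := by
    have := hc.inv (by simpa using hcne)
    simpa [Pi.inv_def] using this
  have hD : HasDerivAt φp
      (K * ((2 : ℕ) * (Real.cosh (-a))⁻¹ ^ 1 *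
        (-(Real.sinh (-a) * (s / 2)) / Real.cosh (-a) ^ 2))) 0 := by
    have := (hinv.pow 2).const_mul K
    show HasDerivAt (fun x => K * (1 / Real.cosh (s / 2 * x - a)) ^ 2) _ 0
    simp only [one_div]
    refine HasDerivAt.congr_deriv this ?_
    norm_num
  have hφp0 : φp 0 = K * (1 / Real.cosh (-a)) ^ 2 := by
    show K * (1 / Real.cosh (s / 2 * 0 - a)) ^ 2 = _
    norm_num
  have key : deriv φp 0 = Z / 2 * φp 0 := by
    rw [hD.deriv, hφp0, Real.cosh_neg, Real.sinh_neg, htanh]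
    have hch : Real.cosh a ≠ 0 := (Real.cosh_pos a).ne'
    field_simp
    ring
  have hm0 : φm 0 = φp 0 := by show φp (-0) = φp 0; norm_num
  have hd : deriv φm 0 = -deriv φp 0 := by
    show deriv (fun x => φp (-x)) 0 = -deriv φp 0
    rw [deriv_comp_neg]; norm_num
  have hi : iteratedDeriv 2 φm 0 = iteratedDeriv 2 φp 0 := by
    show iteratedDeriv 2 (fun x => φp (-x)) 0 = _
    rw [iteratedDeriv_comp_neg]; norm_num
  refine ⟨hm0, ?_, ?_, key⟩
  · rw [hd, hm0, key]; ring
  · rw [hd, hm0, hi, key]; ring
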